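/- Let E be a real Hilbert space and let L be an orthomodular lattice admitting a strong set of E-valued states. Then for every n ≥ 2 and all a, b : Fin n → L with a(i) ⊥ a(j) for all i ≠ j and a(i) ⊥ b(i) for all i, equation Eₙ holds: (⨆_i a(i)) ∩ ⨅_i (a(i) ∪ b(i)) ≤ ⨆_i b(i). -/

import Mathlib

/-- An ortholattice: a bounded lattice with an orthocomplementation. -/
class Ortholattice (α : Type*) extends Lattice α, BoundedOrder α where
  ocompl : α → α
  sup_ocompl : ∀ a : α, a ⊔ ocompl a = ⊤
  inf_ocompl : ∀ a : α, a ⊓ ocompl a = ⊥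
  ocompl_anti : ∀ a b : α, a ≤ b → ocompl b ≤ ocompl a
  ocompl_ocompl : ∀ a : α, ocompl (ocompl a) = a

postfix:max "ᗮ" => Ortholattice.ocompl

/-- An orthomodular lattice. -/
class OrthomodularLattice (α : Type*) extends Ortholattice α where
  orthomodular : ∀ a b : α, a ≤ b → b = a ⊔ (aᗮ ⊓ b)

/-- The Sasaki hook `x → y = x′ ∪ (x ∩ y)`. -/
def oimp {α : Type*} [Ortholattice α] (x y : α) : α := xᗮ ⊔ (x ⊓ y)

/-- An `E`-valued state on an ortholattice, for a real Hilbert space `E`. -/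
structure HState (E : Type*) [NormedAddCommGroup E] [InnerProductSpace ℝ E]
    (α : Type*) [Ortholattice α] where
  val : α → E
  norm_top : ‖val ⊤‖ = 1
  additive : ∀ a b : α, a ≤ bᗮ → val (a ⊔ b) = val a + val b
  orthogonal : ∀ a b : α, a ≤ bᗮ → (inner ℝ (val a) (val b) : ℝ) = 0

/-- A strong set of `E`-valued states. -/
def IsStrongHSet {E : Type*} [NormedAddCommGroup E] [InnerProductSpace ℝ E]
    {α : Type*} [Ortholattice α] (S : Set (HState E α)) : Prop :=
  ∀ a b : α, (∀ s ∈ S, ‖s.val a‖ = 1 → ‖s.val b‖ = 1) → a ≤ b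

section Aux

variable {E : Type*} [NormedAddCommGroup E] [InnerProductSpace ℝ E]
variable {α : Type*} [Ortholattice α]

lemma ocompl_le_symm {a b : α} (h : a ≤ bᗮ) : b ≤ aᗮ := by
  have h2 := Ortholattice.ocompl_anti _ _ h
  rwa [Ortholattice.ocompl_ocompl] at h2

lemma hstate_val_bot (s : HState E α) : s.val ⊥ = 0 := by
  have h := s.additive ⊥ ⊥ bot_le
  rw [sup_idem] at h
  have : s.val ⊥ + 0 = s.val ⊥ + s.val ⊥ := by rw [add_zero]; exact h
  exact (add_left_cancel this).symm

lemma hstate_norm_le_one (s : HState E α) (c : α) : ‖s.val c‖ ≤ 1 := by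
  have hc : c ≤ cᗮᗮ := le_of_eq (Ortholattice.ocompl_ocompl c).symm
  have hadd := s.additive c cᗮ hc
  have horth := s.orthogonal c cᗮ hc
  rw [Ortholattice.sup_ocompl] at hadd
  have h1 : ‖s.val ⊤‖^2 = ‖s.val c‖^2 + ‖s.val cᗮ‖^2 := by
    rw [hadd, norm_add_sq_real, horth]; ring
  have h2 : ‖s.val ⊤‖ = 1 := s.norm_top
  nlinarith [norm_nonneg (s.val c), norm_nonneg (s.val cᗮ), sq_nonneg (‖s.val cᗮ‖)]

lemma hstate_val_sup (s : HState E α) {n : ℕ} (t : Finset (Fin n)) (a : Fin n → α)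
    (h : ∀ i ∈ t, ∀ j ∈ t, i ≠ j → a i ≤ (a j)ᗮ) :
    s.val (t.sup a) = ∑ i ∈ t, s.val (a i) := by
  induction t using Finset.cons_induction with
  | empty => simp [hstate_val_bot]
  | cons i t hi ih =>
      rw [Finset.sup_cons, Finset.sum_cons]
      have hle : t.sup a ≤ (a i)ᗮ := by
        apply Finset.sup_le
        intro j hj
        exact h j (Finset.mem_cons_of_mem hj) i (Finset.mem_cons_self i t)
          (by rintro rfl; exact hi hj)
      have := s.additive (a i) (t.sup a) (ocompl_le_symm hle)
      rw [this, ih (fun x hx y hy hxy =>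
        h x (Finset.mem_cons_of_mem hx) y (Finset.mem_cons_of_mem hy) hxy)]

end Aux

section AuxOML

variable {E : Type*} [NormedAddCommGroup E] [InnerProductSpace ℝ E]
variable {α : Type*} [OrthomodularLattice α]

lemma hstate_decomp (s : HState E α) {a b : α} (h : a ≤ b) :
    s.val b = s.val a + s.val (aᗮ ⊓ b) ∧
      (inner ℝ (s.val a) (s.val (aᗮ ⊓ b)) : ℝ) = 0 := by
  have hom := OrthomodularLattice.orthomodular a b h
  have hle : a ≤ (aᗮ ⊓ b)ᗮ :=
    ocompl_le_symm (le_trans inf_le_left le_rfl)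
  constructor
  · conv_lhs => rw [hom]
    exact s.additive a (aᗮ ⊓ b) hle
  · exact s.orthogonal a (aᗮ ⊓ b) hle

lemma hstate_val_eq_of_norm_one (s : HState E α) {a b : α} (h : a ≤ b)
    (ha : ‖s.val a‖ = 1) : s.val b = s.val a := by
  obtain ⟨hadd, horth⟩ := hstate_decomp s h
  have h1 : ‖s.val b‖^2 = ‖s.val a‖^2 + ‖s.val (aᗮ ⊓ b)‖^2 := by
    rw [hadd, norm_add_sq_real, horth]; ring
  have h2 : ‖s.val b‖ ≤ 1 := hstate_norm_le_one s b
  have h3 : ‖s.val (aᗮ ⊓ b)‖^2 ≤ 0 := by nlinarith [norm_nonneg (s.val b)]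
  have h4 : s.val (aᗮ ⊓ b) = 0 := by
    have := sq_nonneg ‖s.val (aᗮ ⊓ b)‖
    have : ‖s.val (aᗮ ⊓ b)‖ = 0 := by nlinarith
    exact norm_eq_zero.mp this
  rw [hadd, h4, add_zero]

end AuxOML

theorem En_of_strong_hilbert_states {E : Type*} [NormedAddCommGroup E]
    [InnerProductSpace ℝ E] [CompleteSpace E]
    {α : Type*} [OrthomodularLattice α]
    (S : Set (HState E α)) (hS : IsStrongHSet S)
    (n : ℕ) (hn : 2 ≤ n) (a b : Fin n → α)
    (haa : ∀ i j : Fin n, i ≠ j → a i ≤ (a j)ᗮ)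
    (hab : ∀ i : Fin n, a i ≤ (b i)ᗮ) :
    Finset.univ.sup a ⊓ Finset.univ.inf (fun i => a i ⊔ b i) ≤ Finset.univ.sup b := by
  apply hS
  intro s _hsS hs1
  set x : α := Finset.univ.sup a ⊓ Finset.univ.inf (fun i => a i ⊔ b i) with hxdef
  set B : α := Finset.univ.sup b with hBdef
  -- s (sup a) = s x and equals the sum
  have hxA : x ≤ Finset.univ.sup a := inf_le_left
  have hsA : s.val (Finset.univ.sup a) = s.val x :=
    hstate_val_eq_of_norm_one s hxA hs1
  have hsum : s.val x = ∑ i, s.val (a i) := by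
    rw [← hsA, hstate_val_sup s Finset.univ a (fun i _ j _ hij => haa i j hij)]
  have hbi : ∀ i, s.val (b i) = s.val x - s.val (a i) := by
    intro i
    have hx_le : x ≤ a i ⊔ b i :=
      le_trans inf_le_right (Finset.inf_le (Finset.mem_univ i))
    have h1 : s.val (a i ⊔ b i) = s.val x :=
      hstate_val_eq_of_norm_one s hx_le hs1
    have h2 : s.val (a i ⊔ b i) = s.val (a i) + s.val (b i) :=
      s.additive _ _ (hab i)
    rw [h2] at h1
    exact eq_sub_of_add_eq' h1
  have hinner_xa : ∀ i, (inner ℝ (s.val x) (s.val (a i)) : ℝ) = ‖s.val (a i)‖^2 := by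
    intro i
    rw [hsum, sum_inner, Finset.sum_eq_single i
      (fun j _ hji => s.orthogonal _ _ (haa j i hji))
      (fun h => absurd (Finset.mem_univ i) h)]
    rw [real_inner_self_eq_norm_sq]
  have hnormb : ∀ i, ‖s.val (b i)‖^2 = 1 - ‖s.val (a i)‖^2 := by
    intro i
    rw [hbi i, norm_sub_sq_real, hinner_xa i, hs1]
    ring
  have hsum_t : ∑ i, ‖s.val (a i)‖^2 = 1 := by
    calc ∑ i, ‖s.val (a i)‖^2
        = ∑ i, (inner ℝ (s.val x) (s.val (a i)) : ℝ) := by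
          simp only [hinner_xa]
      _ = (inner ℝ (s.val x) (∑ i, s.val (a i)) : ℝ) := (inner_sum _ _ _).symm
      _ = (inner ℝ (s.val x) (s.val x) : ℝ) := by rw [← hsum]
      _ = 1 := by rw [real_inner_self_eq_norm_sq, hs1]; ring
  have hinner_yb : ∀ i, (inner ℝ (s.val B) (s.val (b i)) : ℝ) = ‖s.val (b i)‖^2 := by
    intro i
    have hle : b i ≤ B := Finset.le_sup (Finset.mem_univ i)
    obtain ⟨hadd, horth⟩ := hstate_decomp s hle
    rw [hadd, inner_add_left, real_inner_self_eq_norm_sq, real_inner_comm, horth,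
      add_zero]
  have hsumb : ∑ i, s.val (b i) = (n : ℝ) • s.val x - s.val x := by
    simp only [hbi, Finset.sum_sub_distrib, ← hsum]
    rw [Finset.sum_const, Finset.card_univ, Fintype.card_fin, Nat.cast_smul_eq_nsmul ℝ]
  have key : (inner ℝ (s.val B) (s.val x) : ℝ) * ((n : ℝ) - 1) = (n : ℝ) - 1 := by
    have h1 : ∑ i, (inner ℝ (s.val B) (s.val (b i)) : ℝ) = (n : ℝ) - 1 := by
      simp only [hinner_yb, hnormb, Finset.sum_sub_distrib, hsum_t,
        Finset.sum_const, Finset.card_univ, Fintype.card_fin, nsmul_eq_mul, mul_one]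
    have h2 : ∑ i, (inner ℝ (s.val B) (s.val (b i)) : ℝ)
        = (inner ℝ (s.val B) (∑ i, s.val (b i)) : ℝ) := (inner_sum _ _ _).symm
    rw [h2, hsumb, inner_sub_right, inner_smul_right] at h1
    linarith [h1]
  have hn1 : (n : ℝ) - 1 ≠ 0 := by
    have : (2 : ℝ) ≤ (n : ℝ) := by exact_mod_cast hn
    linarith
  have hBx : (inner ℝ (s.val B) (s.val x) : ℝ) = 1 :=
    mul_right_cancel₀ hn1 (by rw [key, one_mul])
  have hcs := real_inner_le_norm (s.val B) (s.val x)
  have hle1 := hstate_norm_le_one s B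
  rw [hBx, hs1, mul_one] at hcs
  linarith
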